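/- Let g : ℝ → ℝ be locally Lipschitz and convex on [a,∞) for some a. Then g can be written as g = g∞ + g̃, where g∞ is convex and nondecreasing on all of ℝ, agrees with g on [M,∞) for some M ≥ a, and g̃ is locally Lipschitz with g̃(s) = 0 for s ≥ M. -/

import Mathlib

theorem stmt9 (a : ℝ) (g : ℝ → ℝ)
    (hlip : LocallyLipschitz g)
    (hconv : ConvexOn ℝ (Set.Ici a) g)
    (hpos : ∀ s ≥ a, 0 < g s)
    (b : ℝ) (hb : a ≤ b) (hincr : MonotoneOn g (Set.Ici b)) :
    ∃ M ≥ a, ∃ ginf gtil : ℝ → ℝ,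
      g = ginf + gtil ∧
      ConvexOn ℝ Set.univ ginf ∧
      Monotone ginf ∧
      (∀ s ≥ M, gtil s = 0) ∧
      LocallyLipschitz gtil := by
  set M := max a b with hMdef
  have hMa : a ≤ M := le_max_left a b
  have hMb : b ≤ M := le_max_right a b
  have hmono : MonotoneOn g (Set.Ici M) := hincr.mono (Set.Ici_subset_Ici.2 hMb)
  refine ⟨M, hMa, fun x => g (max x M), fun x => g x - g (max x M), ?_, ?_, ?_, ?_, ?_⟩
  · funext x; simp [Pi.add_apply]
  · refine ⟨convex_univ, ?_⟩
    intro x _ y _ p q hp hq hpq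
    have hxM : M ≤ max x M := le_max_right x M
    have hyM : M ≤ max y M := le_max_right y M
    have hcomb : M ≤ p * max x M + q * max y M := by
      calc M = p * M + q * M := by rw [← add_mul, hpq, one_mul]
        _ ≤ p * max x M + q * max y M := by
            gcongr
    have h1 : max (p • x + q • y) M ≤ p * max x M + q * max y M := by
      apply max_le _ hcomb
      simp only [smul_eq_mul]
      gcongr
      · exact le_max_left x M
      · exact le_max_left y M
    have h2 : g (max (p • x + q • y) M) ≤ g (p * max x M + q * max y M) :=
      hmono (Set.mem_Ici.2 (le_max_right _ _)) (Set.mem_Ici.2 hcomb) h1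
    refine h2.trans ?_
    have := hconv.2 (x := max x M) (y := max y M)
      (Set.mem_Ici.2 (hMa.trans hxM)) (Set.mem_Ici.2 (hMa.trans hyM)) hp hq hpq
    simpa using this
  · intro x y hxy
    exact hmono (le_max_right x M) (le_max_right y M) (max_le_max hxy le_rfl)
  · intro s hs
    simp [max_eq_left hs]
  · exact hlip.sub (hlip.comp (LocallyLipschitz.id.max_const M))
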